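/- arXiv:2502.09177 — 4 statements merged into one kernel-verified Lean document; each statement's English description precedes it below -/
import Mathlib

section
/- Let ρ and σ be density operators on a finite-dimensional Hilbert space with the support of ρ contained in the support of σ. Then the fidelity satisfies F(ρ, σ) ≥ 1 - √(S(ρ‖σ)), where S(ρ‖σ) = Tr(ρ log ρ) - Tr(ρ log σ) is the quantum relative entropy. -/
set_option maxHeartbeats 4000000


open Matrix
open scoped ComplexOrder Classical

/-- Square root of a positive semidefinite matrix (junk value `0` otherwise). -/

noncomputable def msqrt {n : Type*} [Fintype n] [DecidableEq n] (A : Matrix n n ℂ) :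
    Matrix n n ℂ :=
  if h : A.PosSemidef then
    (h.1.eigenvectorUnitary : Matrix n n ℂ) * diagonal ((↑) ∘ Real.sqrt ∘ h.1.eigenvalues) *
      (star h.1.eigenvectorUnitary : Matrix n n ℂ) else 0

/-- Uhlmann fidelity `F(ρ,σ) = Tr √(√σ ρ √σ)`. -/
noncomputable def fidelity {n : Type*} [Fintype n] [DecidableEq n] (ρ σ : Matrix n n ℂ) : ℝ :=
  ((msqrt (msqrt σ * ρ * msqrt σ)).trace).re

/-- Matrix logarithm of a Hermitian matrix via the functional calculus
(with the convention `log 0 = 0` on the kernel; junk value `0` for non-Hermitian input). -/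

noncomputable def mlog {n : Type*} [Fintype n] [DecidableEq n] (A : Matrix n n ℂ) :
    Matrix n n ℂ :=
  if h : A.IsHermitian then h.cfc Real.log else 0

/-- Quantum relative entropy `S(ρ‖σ) = Tr(ρ log ρ) - Tr(ρ log σ)`. -/
noncomputable def relEntropy {n : Type*} [Fintype n] [DecidableEq n] (ρ σ : Matrix n n ℂ) : ℝ :=
  ((ρ * mlog ρ).trace - (ρ * mlog σ).trace).re


section AuxLemmas

open Finset in
/-- Classical bound: Bhattacharyya coefficient vs KL divergence. -/
lemma classical_bc_ge {ι : Type*} [Fintype ι] (P Q : ι → ℝ)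
    (hP : ∀ x, 0 ≤ P x) (hQ : ∀ x, 0 ≤ Q x)
    (hP1 : ∑ x, P x = 1) (hQ1 : ∑ x, Q x = 1)
    (hsupp : ∀ x, Q x = 0 → P x = 0) :
    1 - Real.sqrt (∑ x, P x * (Real.log (P x) - Real.log (Q x)))
      ≤ ∑ x, Real.sqrt (P x * Q x) := by
  set D := ∑ x, P x * (Real.log (P x) - Real.log (Q x)) with hD
  set BC := ∑ x, Real.sqrt (P x * Q x) with hBC
  have hBC0 : 0 ≤ BC := sum_nonneg fun x _ => Real.sqrt_nonneg _
  have hBC1 : BC ≤ 1 := by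
    have := Real.sum_sqrt_mul_sqrt_le (univ : Finset ι) hP hQ
    rw [hP1, hQ1] at this
    calc BC = ∑ x, Real.sqrt (P x) * Real.sqrt (Q x) := by
              simp_rw [hBC, Real.sqrt_mul (hP _)]
      _ ≤ Real.sqrt 1 * Real.sqrt 1 := this
      _ = 1 := by simp
  -- pointwise: 2 * (P x - √(P x * Q x)) ≤ P x * (log P x - log Q x)
  have key : ∀ x, 2 * (P x - Real.sqrt (P x * Q x)) ≤ P x * (Real.log (P x) - Real.log (Q x)) := by
    intro x
    rcases eq_or_lt_of_le (hP x) with h0 | hPx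
    · simp [← h0]
    · have hQx : 0 < Q x := lt_of_le_of_ne (hQ x) fun h => by
        have := hsupp x h.symm; linarith
      have hlog : Real.log (Real.sqrt (Q x / P x)) ≤ Real.sqrt (Q x / P x) - 1 :=
        Real.log_le_sub_one_of_pos (Real.sqrt_pos.2 (div_pos hQx hPx))
      have hlog' : Real.log (Real.sqrt (Q x / P x)) = (Real.log (Q x) - Real.log (P x)) / 2 := by
        rw [Real.log_sqrt (le_of_lt (div_pos hQx hPx)), Real.log_div (ne_of_gt hQx) (ne_of_gt hPx)]
      have hsq : Real.sqrt (Q x / P x) * P x = Real.sqrt (P x * Q x) := by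
        have harg : Q x / P x * P x ^ 2 = P x * Q x := by
          field_simp
        calc Real.sqrt (Q x / P x) * P x
            = Real.sqrt (Q x / P x) * Real.sqrt (P x ^ 2) := by rw [Real.sqrt_sq hPx.le]
          _ = Real.sqrt (Q x / P x * P x ^ 2) :=
              (Real.sqrt_mul (div_nonneg hQx.le hPx.le) _).symm
          _ = Real.sqrt (P x * Q x) := by rw [harg]
      nlinarith [hlog, hlog'.symm ▸ hlog, mul_le_mul_of_nonneg_right hlog hPx.le]
  have hD2 : 2 * (1 - BC) ≤ D := by
    have := Finset.sum_le_sum (fun x (_ : x ∈ univ) => key x)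
    rw [← hD] at this
    calc 2 * (1 - BC) = ∑ x, 2 * (P x - Real.sqrt (P x * Q x)) := by
          rw [← Finset.mul_sum, Finset.sum_sub_distrib, hP1, ← hBC]
      _ ≤ D := this
  have hD0 : 0 ≤ D := le_trans (by nlinarith) hD2
  rcases le_or_gt 1 D with h | h
  · have : 1 ≤ Real.sqrt D := by
      rw [show (1:ℝ) = Real.sqrt 1 by simp]
      exact Real.sqrt_le_sqrt h
    linarith
  · have h1 : D ≤ Real.sqrt D := by
      have h2 : Real.sqrt D ≤ 1 := by
        rw [show (1:ℝ) = Real.sqrt 1 by simp]; exact Real.sqrt_le_sqrt h.le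
      nlinarith [Real.sq_sqrt hD0, Real.sqrt_nonneg D]
    linarith

open Matrix
open scoped ComplexOrder

variable {n : Type*} [Fintype n] [DecidableEq n]

lemma cfc_eq_matrix {A : Matrix n n ℂ} (hA : A.IsHermitian) : hA.cfc id = A := by
  rw [Matrix.IsHermitian.cfc]
  conv_rhs => rw [hA.spectral_theorem]
  rfl

lemma msqrt_eq_cfc {A : Matrix n n ℂ} (hA : A.PosSemidef) :
    msqrt A = hA.1.cfc Real.sqrt := by
  rw [msqrt, dif_pos hA]; rfl

lemma msqrt_isHermitian {A : Matrix n n ℂ} (hA : A.PosSemidef) :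
    (msqrt A)ᴴ = msqrt A := by
  rw [msqrt_eq_cfc hA, ← hA.1.cfc_eq]
  exact (cfc_predicate Real.sqrt A : IsSelfAdjoint _).star_eq

lemma msqrt_mul_self {A : Matrix n n ℂ} (hA : A.PosSemidef) :
    msqrt A * msqrt A = A := by
  rw [msqrt_eq_cfc hA, ← hA.1.cfc_eq, ← cfc_mul Real.sqrt Real.sqrt A, hA.1.cfc_eq]
  have : hA.1.cfc (fun x => Real.sqrt x * Real.sqrt x) = hA.1.cfc id := by
    unfold Matrix.IsHermitian.cfc
    congr 2
    funext i
    simp [Real.mul_self_sqrt (hA.eigenvalues_nonneg i)]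
  rw [this, cfc_eq_matrix]

lemma trace_cfc' {A : Matrix n n ℂ} (hA : A.IsHermitian) (f : ℝ → ℝ) :
    (hA.cfc f).trace = ∑ i, (f (hA.eigenvalues i) : ℂ) := by
  rw [Matrix.IsHermitian.cfc, Unitary.conjStarAlgAut_apply, Matrix.trace_mul_cycle,
    Unitary.coe_star_mul_self, one_mul,
    Matrix.trace_diagonal]
  rfl

lemma trace_diag_mul_diag (a b : n → ℂ) (W : Matrix n n ℂ) :
    (diagonal a * W * diagonal b * Wᴴ).trace
      = ∑ i, ∑ j, a i * b j * (W i j * star (W i j)) := by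
  simp only [Matrix.trace, Matrix.diag, Matrix.mul_apply, Matrix.conjTranspose_apply,
    Matrix.diagonal_apply, ite_mul, zero_mul, mul_ite, mul_zero, Finset.sum_ite_eq,
    Finset.sum_ite_eq', Finset.mem_univ, if_true]
  exact Finset.sum_congr rfl fun i _ => Finset.sum_congr rfl fun j _ => by ring

lemma trace_cfc_mul_cfc {A B : Matrix n n ℂ} (hA : A.IsHermitian) (hB : B.IsHermitian)
    (f g : ℝ → ℝ) :
    (hA.cfc f * hB.cfc g).trace =
      ∑ i, ∑ j, (f (hA.eigenvalues i) : ℂ) * (g (hB.eigenvalues j) : ℂ) *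
        (((star (hA.eigenvectorUnitary : Matrix n n ℂ) * (hB.eigenvectorUnitary : Matrix n n ℂ)) i j) *
          star (((star (hA.eigenvectorUnitary : Matrix n n ℂ) * (hB.eigenvectorUnitary : Matrix n n ℂ)) i j))) := by
  set U := (hA.eigenvectorUnitary : Matrix n n ℂ) with hU
  set V := (hB.eigenvectorUnitary : Matrix n n ℂ) with hV
  set W := star U * V with hW
  have hWH : Wᴴ = star V * U := by
    rw [← Matrix.star_eq_conjTranspose, hW, StarMul.star_mul, star_star]
  have h1 : hA.cfc f * hB.cfc g =
      U * (diagonal (RCLike.ofReal ∘ f ∘ hA.eigenvalues) * W *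
        diagonal (RCLike.ofReal ∘ g ∘ hB.eigenvalues) * (star V)) := by
    rw [Matrix.IsHermitian.cfc, Matrix.IsHermitian.cfc, Unitary.conjStarAlgAut_apply,
      Unitary.conjStarAlgAut_apply, hW]
    simp only [mul_assoc]
    rfl
  rw [h1, Matrix.trace_mul_comm]
  have h2 : diagonal (RCLike.ofReal ∘ f ∘ hA.eigenvalues) * W *
        diagonal (RCLike.ofReal ∘ g ∘ hB.eigenvalues) * (star V) * U
      = diagonal (RCLike.ofReal ∘ f ∘ hA.eigenvalues) * W *
        diagonal (RCLike.ofReal ∘ g ∘ hB.eigenvalues) * Wᴴ := by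
    rw [hWH]; simp only [mul_assoc]
  rw [h2, trace_diag_mul_diag]
  rfl

open Matrix
open scoped ComplexOrder

variable {n : Type*} [Fintype n] [DecidableEq n]

lemma re_trace_le_sum_sqrt_eigenvalues (Y M : Matrix n n ℂ) (hMY : M = Yᴴ * Y)
    (hM : M.PosSemidef) :
    (Y.trace).re ≤ ∑ k, Real.sqrt (hM.1.eigenvalues k) := by
  set E := (hM.1.eigenvectorUnitary : Matrix n n ℂ) with hE
  have hEE : E * star E = 1 := mem_unitaryGroup_iff.mp (hM.1.eigenvectorUnitary).2
  set G := star E * Y * E with hG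
  have htr : G.trace = Y.trace := by
    rw [hG, Matrix.trace_mul_cycle, hEE, one_mul]
  have hGH : Gᴴ = star E * Yᴴ * E := by
    rw [hG]
    simp only [Matrix.star_eq_conjTranspose, Matrix.conjTranspose_mul,
      Matrix.conjTranspose_conjTranspose, mul_assoc]
  have hGG : Gᴴ * G = diagonal (RCLike.ofReal ∘ hM.1.eigenvalues) := by
    have step : Gᴴ * G = star E * M * E := by
      rw [hGH, hG, hMY]
      calc star E * Yᴴ * E * (star E * Y * E)
          = star E * Yᴴ * (E * star E) * Y * E := by simp only [mul_assoc]
        _ = star E * (Yᴴ * Y) * E := by rw [hEE]; simp only [mul_one, mul_assoc]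
    rw [step, hE]
    exact (Unitary.conjStarAlgAut_star_apply (S := ℂ) _ _).symm.trans
      hM.1.conjStarAlgAut_star_eigenvectorUnitary
  have hcol : ∀ k, Complex.normSq (G k k) ≤ hM.1.eigenvalues k := by
    intro k
    have h1 : ((Gᴴ * G) k k).re = hM.1.eigenvalues k := by
      rw [hGG, Matrix.diagonal_apply_eq]; rfl
    have h2 : ((Gᴴ * G) k k).re = ∑ i, Complex.normSq (G i k) := by
      simp only [Matrix.mul_apply, Matrix.conjTranspose_apply, ← Complex.normSq_eq_conj_mul_self]
      rw [Complex.re_sum]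
      simp [Complex.normSq_apply]
    rw [← h1, h2]
    exact Finset.single_le_sum (f := fun i => Complex.normSq (G i k)) (fun i _ => Complex.normSq_nonneg _) (Finset.mem_univ k)
  have hre : (Y.trace).re = ∑ k, (G k k).re := by
    rw [← htr, Matrix.trace, Complex.re_sum]; rfl
  rw [hre]
  refine Finset.sum_le_sum fun k _ => ?_
  calc (G k k).re ≤ ‖G k k‖ := Complex.re_le_norm _
    _ = Real.sqrt (Complex.normSq (G k k)) := by rw [Complex.norm_def]
    _ ≤ Real.sqrt (hM.1.eigenvalues k) := Real.sqrt_le_sqrt (hcol k)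

section samebasis
variable {n : Type*} [Fintype n] [DecidableEq n]

lemma trace_cfc_mul_cfc_self {A : Matrix n n ℂ} (hA : A.IsHermitian) (f g : ℝ → ℝ) :
    (hA.cfc f * hA.cfc g).trace = ∑ i, ((f (hA.eigenvalues i) * g (hA.eigenvalues i) : ℝ) : ℂ) := by
  rw [trace_cfc_mul_cfc hA hA f g]
  have h1 : (star (hA.eigenvectorUnitary : Matrix n n ℂ) * (hA.eigenvectorUnitary : Matrix n n ℂ))
      = 1 := Unitary.coe_star_mul_self _
  rw [h1]
  simp [Matrix.one_apply, apply_ite, Finset.sum_ite_eq]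

end samebasis
end AuxLemmas

theorem fidelity_ge_one_sub_sqrt_relEntropy {n : Type*} [Fintype n] [DecidableEq n]
    (ρ σ : Matrix n n ℂ) (hρ : ρ.PosSemidef) (hρ1 : ρ.trace = 1)
    (hσ : σ.PosSemidef) (hσ1 : σ.trace = 1)
    (hsupp : ∀ v : n → ℂ, σ.mulVec v = 0 → ρ.mulVec v = 0) :
    fidelity ρ σ ≥ 1 - Real.sqrt (relEntropy ρ σ) := by
  classical
  set p : n → ℝ := hρ.1.eigenvalues with hp
  set q : n → ℝ := hσ.1.eigenvalues with hq
  set U : Matrix n n ℂ := (hρ.1.eigenvectorUnitary : Matrix n n ℂ) with hUdef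
  set V : Matrix n n ℂ := (hσ.1.eigenvectorUnitary : Matrix n n ℂ) with hVdef
  set W : Matrix n n ℂ := star U * V with hWdef
  set c : n → n → ℝ := fun i j => Complex.normSq (W i j) with hc
  have hpnn : ∀ i, 0 ≤ p i := fun i => hρ.eigenvalues_nonneg i
  have hqnn : ∀ j, 0 ≤ q j := fun j => hσ.eigenvalues_nonneg j
  have hcnn : ∀ i j, 0 ≤ c i j := fun i j => Complex.normSq_nonneg _
  -- W is unitary
  have hUsm : star U * U = 1 := by rw [hUdef]; exact Unitary.coe_star_mul_self _
  have hVsm : star V * V = 1 := by rw [hVdef]; exact Unitary.coe_star_mul_self _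
  have hUms : U * star U = 1 := by rw [hUdef]; exact Unitary.coe_mul_star_self _
  have hVms : V * star V = 1 := by rw [hVdef]; exact Unitary.coe_mul_star_self _
  have hWW : W * Wᴴ = 1 := by
    rw [← Matrix.star_eq_conjTranspose, hWdef, StarMul.star_mul, star_star]
    calc star U * V * (star V * U) = star U * (V * star V) * U := by simp only [mul_assoc]
      _ = 1 := by rw [hVms, mul_one, hUsm]
  have hWW' : Wᴴ * W = 1 := by
    rw [← Matrix.star_eq_conjTranspose, hWdef, StarMul.star_mul, star_star]
    calc star V * U * (star U * V) = star V * (U * star U) * V := by simp only [mul_assoc]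
      _ = 1 := by rw [hUms, mul_one, hVsm]
  -- row and column sums of c
  have hrow : ∀ i, ∑ j, c i j = 1 := by
    intro i
    have h1 : (W * Wᴴ) i i = 1 := by rw [hWW]; simp [Matrix.one_apply]
    have h2 : (W * Wᴴ) i i = ∑ j, ((c i j : ℝ) : ℂ) := by
      simp only [Matrix.mul_apply, Matrix.conjTranspose_apply, hc]
      exact Finset.sum_congr rfl fun j _ => by
        rw [← Complex.mul_conj]; rfl
    have h3 : ((∑ j, c i j : ℝ) : ℂ) = 1 := by rw [Complex.ofReal_sum, ← h2, h1]
    exact_mod_cast h3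
  have hcol : ∀ j, ∑ i, c i j = 1 := by
    intro j
    have h1 : (Wᴴ * W) j j = 1 := by rw [hWW']; simp [Matrix.one_apply]
    have h2 : (Wᴴ * W) j j = ∑ i, ((c i j : ℝ) : ℂ) := by
      simp only [Matrix.mul_apply, Matrix.conjTranspose_apply, hc]
      exact Finset.sum_congr rfl fun i _ => by
        rw [mul_comm, ← Complex.mul_conj]; rfl
    have h3 : ((∑ i, c i j : ℝ) : ℂ) = 1 := by rw [Complex.ofReal_sum, ← h2, h1]
    exact_mod_cast h3
  -- sums of eigenvalues
  have hsump : ∑ i, p i = 1 := by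
    have h1 : ρ.trace = ∑ i, ((p i : ℝ) : ℂ) := by
      conv_lhs => rw [← cfc_eq_matrix hρ.1]
      exact trace_cfc' hρ.1 _root_.id
    have h2 : ((∑ i, p i : ℝ) : ℂ) = 1 := by rw [Complex.ofReal_sum, ← h1, hρ1]
    exact_mod_cast h2
  have hsumq : ∑ j, q j = 1 := by
    have h1 : σ.trace = ∑ j, ((q j : ℝ) : ℂ) := by
      conv_lhs => rw [← cfc_eq_matrix hσ.1]
      exact trace_cfc' hσ.1 _root_.id
    have h2 : ((∑ j, q j : ℝ) : ℂ) = 1 := by rw [Complex.ofReal_sum, ← h1, hσ1]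
    exact_mod_cast h2
  -- support condition
  have hpqsupp : ∀ i j, q j = 0 → p i * c i j = 0 := by
    intro i j hqj
    -- column j of V is in the kernel of σ
    have hσV : σ * V = V * diagonal (RCLike.ofReal ∘ q) := by
      conv_lhs => rw [hσ.1.spectral_theorem]
      rw [hVdef]
      calc (hσ.1.eigenvectorUnitary : Matrix n n ℂ) * diagonal (RCLike.ofReal ∘ q) *
            star (hσ.1.eigenvectorUnitary : Matrix n n ℂ) * (hσ.1.eigenvectorUnitary : Matrix n n ℂ)
          = (hσ.1.eigenvectorUnitary : Matrix n n ℂ) * diagonal (RCLike.ofReal ∘ q) *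
            (star (hσ.1.eigenvectorUnitary : Matrix n n ℂ) * (hσ.1.eigenvectorUnitary : Matrix n n ℂ)) := by
            simp only [mul_assoc]
        _ = _ := by rw [Unitary.coe_star_mul_self]; simp
    have hker : σ.mulVec (fun k => V k j) = 0 := by
      funext i'
      have : σ.mulVec (fun k => V k j) i' = (σ * V) i' j := by
        simp [Matrix.mulVec, Matrix.mul_apply, dotProduct]
      rw [this, hσV, Matrix.mul_diagonal]
      simp [hqj]
    have hρker : ρ.mulVec (fun k => V k j) = 0 := hsupp _ hker
    -- entry of star U * ρ * V
    have hent : (star U * (ρ * V)) i j = 0 := by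
      have hcolzero : ∀ k, (ρ * V) k j = 0 := by
        intro k
        have : (ρ * V) k j = ρ.mulVec (fun k' => V k' j) k := by
          simp [Matrix.mulVec, Matrix.mul_apply, dotProduct]
        rw [this, hρker]
        rfl
      rw [Matrix.mul_apply]
      exact Finset.sum_eq_zero fun k _ => by rw [hcolzero k, mul_zero]
    have hent2 : star U * (ρ * V) = diagonal (RCLike.ofReal ∘ p) * W := by
      conv_lhs => rw [show ρ = U * diagonal (RCLike.ofReal ∘ p) * star U from hρ.1.spectral_theorem]
      rw [hWdef]
      calc star U * (U * diagonal (RCLike.ofReal ∘ p) * star U * V)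
          = (star U * U) * diagonal (RCLike.ofReal ∘ p) * (star U * V) := by
            simp only [mul_assoc]
        _ = diagonal (RCLike.ofReal ∘ p) * (star U * V) := by
            rw [hUdef, Unitary.coe_star_mul_self]; simp
    have hfin : ((p i : ℝ) : ℂ) * W i j = 0 := by
      have := hent
      rw [hent2, Matrix.diagonal_mul] at this
      exact this
    rcases mul_eq_zero.mp hfin with h | h
    · have : p i = 0 := by exact_mod_cast h
      rw [this, zero_mul]
    · rw [hc]; simp only [h]
      simp
  -- trace computations
  have hmlogρ : mlog ρ = hρ.1.cfc Real.log := dif_pos hρ.1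
  have hmlogσ : mlog σ = hσ.1.cfc Real.log := dif_pos hσ.1
  have hWstar : ∀ i j, W i j * star (W i j) = ((c i j : ℝ) : ℂ) := by
    intro i j
    rw [Complex.star_def, Complex.mul_conj, hc]
  have htr1 : ((ρ * mlog ρ).trace).re = ∑ i, p i * Real.log (p i) := by
    rw [hmlogρ]
    rw [show ρ * hρ.1.cfc Real.log = hρ.1.cfc _root_.id * hρ.1.cfc Real.log by
      rw [cfc_eq_matrix hρ.1]]
    rw [trace_cfc_mul_cfc_self hρ.1 _root_.id Real.log, Complex.re_sum]
    simp [hp]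
  have htr2 : ((ρ * mlog σ).trace).re = ∑ i, ∑ j, p i * Real.log (q j) * c i j := by
    rw [hmlogσ]
    rw [show ρ * hσ.1.cfc Real.log = hρ.1.cfc _root_.id * hσ.1.cfc Real.log by
      rw [cfc_eq_matrix hρ.1]]
    rw [trace_cfc_mul_cfc hρ.1 hσ.1 _root_.id Real.log]
    rw [← hUdef, ← hVdef, ← hWdef]
    have hci : (∑ i, ∑ j, ((_root_.id (hρ.1.eigenvalues i) : ℝ) : ℂ) *
        ((Real.log (hσ.1.eigenvalues j) : ℝ) : ℂ) * (W i j * star (W i j)))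
        = ((∑ i, ∑ j, p i * Real.log (q j) * c i j : ℝ) : ℂ) := by
      push_cast
      refine Finset.sum_congr rfl fun i _ => Finset.sum_congr rfl fun j _ => ?_
      rw [hWstar i j]
      push_cast
      try simp only [id_eq]
      try ring
    rw [hci, Complex.ofReal_re]
  -- classical distributions
  set P : n × n → ℝ := fun x => p x.1 * c x.1 x.2 with hPdef
  set Q : n × n → ℝ := fun x => q x.2 * c x.1 x.2 with hQdef
  have hrel : relEntropy ρ σ = ∑ x : n × n, P x * (Real.log (P x) - Real.log (Q x)) := by
    have h0 : relEntropy ρ σ = ((ρ * mlog ρ).trace).re - ((ρ * mlog σ).trace).re := by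
      rw [relEntropy, Complex.sub_re]
    rw [h0, htr1, htr2, Fintype.sum_prod_type]
    have h1 : ∑ i, p i * Real.log (p i) = ∑ i, ∑ j, c i j * (p i * Real.log (p i)) := by
      refine Finset.sum_congr rfl fun i _ => ?_
      rw [← Finset.sum_mul, hrow i, one_mul]
    rw [h1, ← Finset.sum_sub_distrib]
    refine Finset.sum_congr rfl fun i _ => ?_
    rw [← Finset.sum_sub_distrib]
    refine Finset.sum_congr rfl fun j _ => ?_
    show c i j * (p i * Real.log (p i)) - p i * Real.log (q j) * c i j
        = (p i * c i j) * (Real.log (p i * c i j) - Real.log (q j * c i j))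
    rcases eq_or_lt_of_le (hcnn i j) with h0c | hcpos
    · simp [← h0c]
    rcases eq_or_lt_of_le (hpnn i) with h0p | hppos
    · simp [← h0p]
    have hqpos : 0 < q j := by
      rcases eq_or_lt_of_le (hqnn j) with h0q | h
      · exfalso
        have := hpqsupp i j h0q.symm
        nlinarith
      · exact h
    rw [Real.log_mul (ne_of_gt hppos) (ne_of_gt hcpos),
      Real.log_mul (ne_of_gt hqpos) (ne_of_gt hcpos)]
    ring
  -- hypotheses of the classical lemma
  have hPnn : ∀ x : n × n, 0 ≤ P x := fun x => mul_nonneg (hpnn _) (hcnn _ _)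
  have hQnn : ∀ x : n × n, 0 ≤ Q x := fun x => mul_nonneg (hqnn _) (hcnn _ _)
  have hP1 : ∑ x : n × n, P x = 1 := by
    rw [Fintype.sum_prod_type]
    have : ∀ i, ∑ j, P (i, j) = p i := by
      intro i
      show ∑ j, p i * c i j = p i
      rw [← Finset.mul_sum, hrow i, mul_one]
    simp_rw [this]
    exact hsump
  have hQ1 : ∑ x : n × n, Q x = 1 := by
    rw [Fintype.sum_prod_type_right]
    have : ∀ j, ∑ i, Q (i, j) = q j := by
      intro j
      show ∑ i, q j * c i j = q j
      rw [← Finset.mul_sum, hcol j, mul_one]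
    simp_rw [this]
    exact hsumq
  have hQP : ∀ x : n × n, Q x = 0 → P x = 0 := by
    rintro ⟨i, j⟩ h
    rcases mul_eq_zero.mp h with h | h
    · exact hpqsupp i j h
    · show p i * c i j = 0
      rw [h, mul_zero]
  have hclass := classical_bc_ge P Q hPnn hQnn hP1 hQ1 hQP
  rw [← hrel] at hclass
  -- identify the Bhattacharyya coefficient
  have hBC : ∑ x : n × n, Real.sqrt (P x * Q x)
      = ∑ i, ∑ j, Real.sqrt (p i) * Real.sqrt (q j) * c i j := by
    rw [Fintype.sum_prod_type]
    refine Finset.sum_congr rfl fun i _ => Finset.sum_congr rfl fun j _ => ?_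
    show Real.sqrt (p i * c i j * (q j * c i j)) = Real.sqrt (p i) * Real.sqrt (q j) * c i j
    have harg : p i * c i j * (q j * c i j)
        = (Real.sqrt (p i) * Real.sqrt (q j) * c i j) ^ 2 := by
      rw [mul_pow, mul_pow, Real.sq_sqrt (hpnn i), Real.sq_sqrt (hqnn j)]
      ring
    rw [harg]
    exact Real.sqrt_sq (mul_nonneg (mul_nonneg (Real.sqrt_nonneg _) (Real.sqrt_nonneg _)) (hcnn i j))
  rw [hBC] at hclass
  -- fidelity side
  set Y : Matrix n n ℂ := msqrt ρ * msqrt σ with hYdef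
  have hBY : msqrt σ * ρ * msqrt σ = Yᴴ * Y := by
    rw [hYdef, Matrix.conjTranspose_mul, msqrt_isHermitian hσ, msqrt_isHermitian hρ]
    calc msqrt σ * ρ * msqrt σ
        = msqrt σ * (msqrt ρ * msqrt ρ) * msqrt σ := by rw [msqrt_mul_self hρ]
      _ = msqrt σ * msqrt ρ * (msqrt ρ * msqrt σ) := by simp only [mul_assoc]
  have hB : (msqrt σ * ρ * msqrt σ).PosSemidef := by
    rw [hBY]
    exact posSemidef_conjTranspose_mul_self Y
  have hfid : fidelity ρ σ = ∑ k, Real.sqrt (hB.1.eigenvalues k) := by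
    rw [fidelity, msqrt_eq_cfc hB, trace_cfc' hB.1 Real.sqrt, Complex.re_sum]
    simp
  have hYtr : (Y.trace).re = ∑ i, ∑ j, Real.sqrt (p i) * Real.sqrt (q j) * c i j := by
    rw [hYdef, msqrt_eq_cfc hρ, msqrt_eq_cfc hσ, trace_cfc_mul_cfc hρ.1 hσ.1 Real.sqrt Real.sqrt]
    rw [← hUdef, ← hVdef, ← hWdef]
    have hci : (∑ i, ∑ j, ((Real.sqrt (hρ.1.eigenvalues i) : ℝ) : ℂ) *
        ((Real.sqrt (hσ.1.eigenvalues j) : ℝ) : ℂ) * (W i j * star (W i j)))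
        = ((∑ i, ∑ j, Real.sqrt (p i) * Real.sqrt (q j) * c i j : ℝ) : ℂ) := by
      push_cast
      refine Finset.sum_congr rfl fun i _ => Finset.sum_congr rfl fun j _ => ?_
      rw [hWstar i j]
      try push_cast
      try ring
    rw [hci, Complex.ofReal_re]
  have hkey : (Y.trace).re ≤ ∑ k, Real.sqrt (hB.1.eigenvalues k) :=
    re_trace_le_sum_sqrt_eigenvalues Y (msqrt σ * ρ * msqrt σ) hBY hB
  rw [ge_iff_le, hfid]
  exact le_trans hclass (by rw [← hYtr]; exact hkey)
end

section
/- Let Π be an orthogonal projection and F_e operators on a finite-dimensional Hilbert space satisfying Π F_{e'}† F_e Π = δ_{e',e} d_e Π with d_e > 0. Write the polar decompositions F_e Π = U_e Π √(d_e) with U_e unitary. Then the Petz recovery Kraus operators R_e := Π F_e† (Σ_{e'} F_{e'} Π F_{e'}†)^{-1/2} satisfy R_e = Π U_e†, where the inverse square root is taken on the support. -/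
open Matrix
open scoped ComplexOrder

/-- The Petz recovery Kraus operators `R_e = Π F_e† (Σ F_{e'} Π F_{e'}†)^{-1/2}` (inverse
square root taken on the support, characterized abstractly by the hypotheses on `B`)
equal `Π U_e†` under the diagonalized Knill–Laflamme condition. -/
theorem petz_kraus_eq_perfect_recovery_kraus
    {n ι : Type*} [Fintype n] [DecidableEq n] [Fintype ι] [DecidableEq ι]
    (P : Matrix n n ℂ) (hP : P.IsHermitian) (hP2 : P * P = P)
    (F U : ι → Matrix n n ℂ) (hU : ∀ e, U e ∈ Matrix.unitaryGroup n ℂ)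
    (d : ι → ℝ) (hd : ∀ e, 0 < d e)
    (hKL : ∀ e' e, P * (F e')ᴴ * (F e) * P = if e' = e then (d e : ℂ) • P else 0)
    (hpolar : ∀ e, F e * P = (Real.sqrt (d e) : ℂ) • (U e * P))
    -- `B` is the inverse square root of `S := Σ_e F_e Π F_e†` on its support,
    -- whose support projection is `Psupp := Σ_e U_e Π U_e†`:
    (B : Matrix n n ℂ) (hB : B.PosSemidef)
    (hBcomm : B * (∑ e, F e * P * (F e)ᴴ) = (∑ e, F e * P * (F e)ᴴ) * B)
    (hBinv : B * (∑ e, F e * P * (F e)ᴴ) * B = ∑ e, U e * P * (U e)ᴴ)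
    (hBsupp : B * (∑ e, U e * P * (U e)ᴴ) = B) :
    ∀ e, P * (F e)ᴴ * B = P * (U e)ᴴ := by
  have hPH : Pᴴ = P := hP
  -- P F†  =  √d • P U†
  have h2 : ∀ e, P * (F e)ᴴ = (Real.sqrt (d e) : ℂ) • (P * (U e)ᴴ) := by
    intro e
    calc P * (F e)ᴴ = (F e * P)ᴴ := by rw [conjTranspose_mul, hPH]
      _ = ((Real.sqrt (d e) : ℂ) • (U e * P))ᴴ := by rw [hpolar]
      _ = (Real.sqrt (d e) : ℂ) • (P * (U e)ᴴ) := by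
          rw [conjTranspose_smul, conjTranspose_mul, hPH, Complex.star_def,
            Complex.conj_ofReal]
  have hsqrt_pos : ∀ e, (0:ℝ) < Real.sqrt (d e) := fun e => Real.sqrt_pos.mpr (hd e)
  have hsqrt_ne : ∀ e, (Real.sqrt (d e) : ℂ) ≠ 0 := fun e => by
    exact_mod_cast (hsqrt_pos e).ne'
  -- orthogonality of the U_e P's
  have hUU : ∀ e' e, P * (U e')ᴴ * U e * P = if e' = e then P else 0 := by
    intro e' e
    by_cases h : e' = e
    · subst h
      have h1 : (U e')ᴴ * U e' = 1 := by
        have := (Unitary.mem_iff.mp (hU e')).1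
        simpa [star] using this
      rw [if_pos rfl]
      calc P * (U e')ᴴ * U e' * P = P * ((U e')ᴴ * U e') * P := by
            simp only [mul_assoc]
        _ = P := by rw [h1, mul_one, hP2]
    · have h1 := hKL e' e
      rw [if_neg h] at h1
      have h3 : P * (F e')ᴴ * F e * P
          = ((Real.sqrt (d e') : ℂ) * (Real.sqrt (d e) : ℂ)) •
            (P * (U e')ᴴ * U e * P) := by
        calc P * (F e')ᴴ * F e * P
            = (P * (F e')ᴴ) * (F e * P) := by simp only [mul_assoc]
          _ = ((Real.sqrt (d e') : ℂ) • (P * (U e')ᴴ)) * ((Real.sqrt (d e) : ℂ) • (U e * P)) := by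
              rw [h2, hpolar]
          _ = ((Real.sqrt (d e') : ℂ) * (Real.sqrt (d e) : ℂ)) •
              (P * (U e')ᴴ * U e * P) := by
              rw [smul_mul_assoc, mul_smul_comm, smul_smul]
              simp only [mul_assoc]
      rw [h3] at h1
      rw [if_neg h]
      have hc : ((Real.sqrt (d e') : ℂ) * (Real.sqrt (d e) : ℂ)) ≠ 0 :=
        mul_ne_zero (hsqrt_ne e') (hsqrt_ne e)
      exact (smul_eq_zero.mp h1).resolve_left hc
  intro e
  set M : Matrix n n ℂ := U e * P with hM
  set S : Matrix n n ℂ := ∑ e', F e' * P * (F e')ᴴ with hS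
  set Q : Matrix n n ℂ := ∑ e', U e' * P * (U e')ᴴ with hQ
  -- each summand of S
  have hSterm : ∀ e', F e' * P * (F e')ᴴ = (d e' : ℂ) • (U e' * P * (U e')ᴴ) := by
    intro e'
    calc F e' * P * (F e')ᴴ = (F e' * P) * (P * (F e')ᴴ) := by
          conv_lhs => rw [← hP2]
          simp only [mul_assoc]
      _ = ((Real.sqrt (d e') : ℂ) • (U e' * P)) * ((Real.sqrt (d e') : ℂ) • (P * (U e')ᴴ)) := by
          rw [hpolar, h2]
      _ = ((Real.sqrt (d e') : ℂ) * (Real.sqrt (d e') : ℂ)) • ((U e' * P) * (P * (U e')ᴴ)) := by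
          rw [smul_mul_assoc, mul_smul_comm, smul_smul]
      _ = (d e' : ℂ) • (U e' * P * (U e')ᴴ) := by
          rw [← Complex.ofReal_mul, Real.mul_self_sqrt (hd e').le]
          congr 1
          calc (U e' * P) * (P * (U e')ᴴ) = U e' * (P * P) * (U e')ᴴ := by
                simp only [mul_assoc]
            _ = U e' * P * (U e')ᴴ := by rw [hP2]
  have haux : ∀ e', U e' * P * (U e')ᴴ * M = U e' * (P * (U e')ᴴ * U e * P) := by
    intro e'; rw [hM]; simp only [mul_assoc]
  -- Q M = M
  have hQM : Q * M = M := by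
    rw [hQ, Finset.sum_mul]
    rw [Finset.sum_eq_single e]
    · rw [haux, hUU e e, if_pos rfl, hM]
    · intro e' _ hne
      rw [haux, hUU e' e, if_neg hne, mul_zero]
    · intro h; exact absurd (Finset.mem_univ e) h
  -- S M = d e • M
  have hSM : S * M = (d e : ℂ) • M := by
    rw [hS, Finset.sum_mul]
    rw [Finset.sum_eq_single e]
    · rw [hSterm e, smul_mul_assoc, haux, hUU e e, if_pos rfl, hM]
    · intro e' _ hne
      rw [hSterm e', smul_mul_assoc, haux, hUU e' e, if_neg hne, mul_zero, smul_zero]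
    · intro h; exact absurd (Finset.mem_univ e) h
  -- B² S = Q
  have hB2S : B * B * S = Q := by
    calc B * B * S = B * (B * S) := by rw [mul_assoc]
      _ = B * (S * B) := by rw [hBcomm]
      _ = B * S * B := by rw [mul_assoc]
      _ = Q := hBinv
  -- B² M = (d e)⁻¹ • M
  have hB2M : B * B * M = ((d e : ℂ))⁻¹ • M := by
    have h1 : B * B * (S * M) = M := by
      calc B * B * (S * M) = (B * B * S) * M := by simp only [mul_assoc]
        _ = M := by rw [hB2S, hQM]
    rw [hSM, mul_smul_comm] at h1
    have hdne : (d e : ℂ) ≠ 0 := by exact_mod_cast (hd e).ne'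
    calc B * B * M = ((d e : ℂ))⁻¹ • ((d e : ℂ) • (B * B * M)) := by
          rw [smul_smul, inv_mul_cancel₀ hdne, one_smul]
      _ = ((d e : ℂ))⁻¹ • M := by rw [h1]
  -- λ := (√d)⁻¹
  set lam : ℝ := (Real.sqrt (d e))⁻¹ with hlam
  have hlam_pos : 0 < lam := inv_pos.mpr (hsqrt_pos e)
  have hlam_sq : (lam : ℂ) * (lam : ℂ) = ((d e : ℂ))⁻¹ := by
    rw [← Complex.ofReal_mul]
    rw [hlam, ← mul_inv, Real.mul_self_sqrt (hd e).le]
    simp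
  -- A := B + λ•1 is positive definite, hence a unit
  have hlamC_pos : (0:ℂ) < (lam : ℂ) := by exact_mod_cast hlam_pos
  have hA : (B + (lam : ℂ) • (1 : Matrix n n ℂ)).PosDef := by
    have h1 : ((lam : ℂ) • (1 : Matrix n n ℂ)).PosDef := by
      rw [smul_one_eq_diagonal]
      exact posDef_diagonal_iff.mpr fun i => hlamC_pos
    exact Matrix.PosDef.posSemidef_add hB h1
  have hAunit : IsUnit (B + (lam : ℂ) • (1 : Matrix n n ℂ)) := hA.isUnit
  -- (B + λ)(B - λ) M = 0
  have hfactor : (B + (lam : ℂ) • 1) * ((B - (lam : ℂ) • 1) * M) = 0 := by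
    have hexp : (B + (lam : ℂ) • 1) * ((B - (lam : ℂ) • 1) * M)
        = B * B * M - ((lam : ℂ) * (lam : ℂ)) • M := by
      have h1 : (B + (lam : ℂ) • 1) * (B - (lam : ℂ) • 1)
          = B * B - ((lam : ℂ) * (lam : ℂ)) • 1 := by
        simp only [mul_sub, sub_mul, add_mul, mul_add, smul_mul_assoc, mul_smul_comm,
          smul_add, smul_sub, one_mul, mul_one, smul_smul]
        abel
      rw [← mul_assoc, h1, sub_mul, smul_mul_assoc, one_mul]
    rw [hexp, hB2M, hlam_sq, sub_self]
  have hBM : (B - (lam : ℂ) • 1) * M = 0 :=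
    (IsUnit.mul_right_eq_zero hAunit).mp hfactor
  have hBM' : B * M = (lam : ℂ) • M := by
    have h1 : B * M - (lam : ℂ) • M = 0 := by
      rw [← hBM, sub_mul, smul_mul_assoc, one_mul]
    linear_combination (norm := abel) h1
  -- conjugate transpose
  have hBH : Bᴴ = B := hB.isHermitian
  have hMB : (P * (U e)ᴴ) * B = (lam : ℂ) • (P * (U e)ᴴ) := by
    have h1 := congrArg conjTranspose hBM'
    rw [conjTranspose_mul, conjTranspose_smul, hBH, hM, conjTranspose_mul, hPH,
      Complex.star_def, Complex.conj_ofReal] at h1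
    exact h1
  -- conclude
  rw [h2 e, smul_mul_assoc, hMB, smul_smul, ← Complex.ofReal_mul,
    hlam, mul_inv_cancel₀ (hsqrt_pos e).ne']
  simp
end

section
/- Let [c_{e',e}] be a Hermitian matrix indexed by a finite set of error labels satisfying Π E_{e'}† E_e Π = c_{e',e} Π for a projection Π and operators E_e. Then there exists a unitary matrix [u_{e',e}] such that the operators F_e := Σ_{e'} u_{e',e} E_{e'} satisfy Π F_{e'}† F_e Π = δ_{e',e} d_e Π with d_e ≥ 0 real. -/
open Matrix
open scoped ComplexOrder

section aux

variable {n ι : Type*} [Fintype n] [DecidableEq n] [Fintype ι] [DecidableEq ι]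

omit [DecidableEq n] [DecidableEq ι] in
lemma smul_proj_inj {P : Matrix n n ℂ} (hPne : P ≠ 0) {s t : ℂ}
    (h : s • P = t • P) : s = t := by
  have : (s - t) • P = 0 := by rw [sub_smul, h, sub_self]
  rcases smul_eq_zero.mp this with h' | h'
  · exact sub_eq_zero.mp h'
  · exact absurd h' hPne

omit [DecidableEq n] [DecidableEq ι] in
lemma KL_expand (P : Matrix n n ℂ) (E : ι → Matrix n n ℂ) (c : ι → ι → ℂ)
    (hc : ∀ e' e, P * (E e')ᴴ * (E e) * P = c e' e • P) (a b : ι → ℂ) :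
    P * (∑ f, a f • E f)ᴴ * (∑ g, b g • E g) * P
      = (∑ f, ∑ g, star (a f) * b g * c f g) • P := by
  have hBH : (∑ f, a f • E f)ᴴ = ∑ f, star (a f) • (E f)ᴴ := by
    rw [conjTranspose_sum]
    exact Finset.sum_congr rfl fun f _ => by rw [conjTranspose_smul]
  rw [hBH]
  simp only [Matrix.mul_sum, Matrix.sum_mul, Matrix.mul_smul, Matrix.smul_mul, smul_smul]
  simp only [hc, smul_smul, Finset.smul_sum, Finset.sum_smul]
  rw [Finset.sum_comm]
  refine Finset.sum_congr rfl fun f _ => Finset.sum_congr rfl fun g _ => ?_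
  rw [show b g * (star (a f) * c f g) = star (a f) * b g * c f g by ring]

end aux

/-- Diagonalization step of the Knill–Laflamme condition: the Hermitian matrix
`[c_{e',e}]` can be diagonalized by a unitary `[u_{e',e}]` so that the rotated
Kraus operators `F_e = Σ_{e'} u_{e',e} E_{e'}` satisfy the diagonal condition. -/
theorem KL_diagonalization
    {n ι : Type*} [Fintype n] [DecidableEq n] [Fintype ι] [DecidableEq ι]
    (P : Matrix n n ℂ) (hP : P.IsHermitian) (hP2 : P * P = P) (hPne : P ≠ 0)
    (E : ι → Matrix n n ℂ) (c : ι → ι → ℂ)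
    (hc : ∀ e' e, P * (E e')ᴴ * (E e) * P = c e' e • P) :
    ∃ u ∈ Matrix.unitaryGroup ι ℂ, ∃ d : ι → ℝ, (∀ e, 0 ≤ d e) ∧
      ∀ e' e, P * (∑ f, u f e' • E f)ᴴ * (∑ f, u f e • E f) * P =
        if e' = e then ((d e : ℝ) : ℂ) • P else 0 := by
  -- a fixed vector of P
  obtain ⟨v, hv⟩ : ∃ v : n → ℂ, P *ᵥ v ≠ 0 := by
    by_contra h
    push_neg at h
    apply hPne
    ext i j
    have := congrFun (h (Pi.single j 1)) i
    simpa [mulVec_single] using this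
  set w : n → ℂ := P *ᵥ v with hw
  have hPw : P *ᵥ w = w := by rw [hw, mulVec_mulVec, hP2]
  have hww : 0 < star w ⬝ᵥ w := by
    have h1 : 0 ≤ star w ⬝ᵥ w := by
      simp only [dotProduct, Pi.star_apply]
      apply Finset.sum_nonneg
      intro i _
      simpa using star_mul_self_nonneg (w i)
    rcases h1.lt_or_eq with h | h
    · exact h
    · exfalso
      apply hv
      funext i
      have hwi : w i = 0 := by
        have h2 : ∑ i, star (w i) * w i = 0 := by
          simpa [dotProduct] using h.symm
        have h3 : ∀ j ∈ Finset.univ, (0:ℂ) ≤ star (w j) * w j := fun j _ => by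
          simpa using star_mul_self_nonneg (w j)
        have := (Finset.sum_eq_zero_iff_of_nonneg h3).mp h2 i (Finset.mem_univ i)
        simpa using this
      simpa [hw] using hwi
  -- PSD scalar extraction
  have key : ∀ s : ℂ, (s • P).PosSemidef → 0 ≤ s := by
    intro s hs
    have h1 := hs.dotProduct_mulVec_nonneg w
    have h2 : star w ⬝ᵥ (s • P) *ᵥ w = s * (star w ⬝ᵥ w) := by
      rw [smul_mulVec, hPw, dotProduct_smul, smul_eq_mul]
    rw [h2] at h1
    have ht := hww
    have heq : s = (s * (star w ⬝ᵥ w)) * (star w ⬝ᵥ w)⁻¹ := by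
      field_simp
    rw [heq]
    set t := star w ⬝ᵥ w with htdef
    obtain ⟨hre, him⟩ := Complex.pos_iff.mp ht
    have htr : t = ((t.re : ℝ) : ℂ) := Complex.ext rfl (by simpa using him.symm)
    have hinv : (0:ℂ) ≤ t⁻¹ := by
      rw [htr, ← Complex.ofReal_inv, Complex.zero_le_real]
      positivity
    exact mul_nonneg h1 hinv
  -- the matrix of coefficients
  set C : Matrix ι ι ℂ := Matrix.of c with hCdef
  have hCapp : ∀ f g, C f g = c f g := fun f g => rfl
  -- C is Hermitian
  have hcH : C.IsHermitian := by
    ext e' e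
    have h1 := congrArg conjTranspose (hc e e')
    rw [conjTranspose_smul, conjTranspose_mul, conjTranspose_mul, conjTranspose_mul,
      conjTranspose_conjTranspose, hP.eq] at h1
    have h2 : P * (E e')ᴴ * (E e) * P = star (c e e') • P := by
      rw [← h1]; noncomm_ring
    have h3 := smul_proj_inj hPne ((hc e' e).symm.trans h2)
    simp only [conjTranspose_apply, hCapp]
    exact h3.symm
  -- C is positive semidefinite
  have hcPSD : C.PosSemidef := by
    refine .of_dotProduct_mulVec_nonneg hcH fun x => ?_
    apply key
    have hexp := KL_expand P E c hc x x
    have hsc : star x ⬝ᵥ C *ᵥ x = ∑ f, ∑ g, star (x f) * x g * c f g := by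
      simp only [dotProduct, mulVec, Pi.star_apply, Finset.mul_sum, dotProduct, hCapp]
      exact Finset.sum_congr rfl fun f _ => Finset.sum_congr rfl fun g _ => by ring
    rw [hsc, ← hexp]
    have hre : P * (∑ f, x f • E f)ᴴ * (∑ g, x g • E g) * P
        = ((∑ g, x g • E g) * P)ᴴ * ((∑ g, x g • E g) * P) := by
      rw [conjTranspose_mul, hP.eq]; noncomm_ring
    rw [hre]
    exact posSemidef_conjTranspose_mul_self _
  -- spectral decomposition
  refine ⟨(hcH.eigenvectorUnitary : Matrix ι ι ℂ), hcH.eigenvectorUnitary.2, hcH.eigenvalues,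
    fun e => hcPSD.eigenvalues_nonneg e, fun e' e => ?_⟩
  rw [KL_expand P E c hc _ _]
  have hdiag : star (hcH.eigenvectorUnitary : Matrix ι ι ℂ) * C
      * (hcH.eigenvectorUnitary : Matrix ι ι ℂ) = diagonal (RCLike.ofReal ∘ hcH.eigenvalues) := by
    have := hcH.conjStarAlgAut_star_eigenvectorUnitary
    rwa [Unitary.conjStarAlgAut_star_apply] at this
  have hentry : (∑ f, ∑ g, star ((hcH.eigenvectorUnitary : Matrix ι ι ℂ) f e')
        * (hcH.eigenvectorUnitary : Matrix ι ι ℂ) g e * c f g)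
      = ((star (hcH.eigenvectorUnitary : Matrix ι ι ℂ) * C
          * (hcH.eigenvectorUnitary : Matrix ι ι ℂ)) e' e) := by
    simp only [Matrix.mul_apply, Matrix.star_apply, Finset.sum_mul, Finset.mul_sum, hCapp]
    rw [Finset.sum_comm]
    exact Finset.sum_congr rfl fun f _ => Finset.sum_congr rfl fun g _ => by ring
  rw [hentry, hdiag]
  by_cases h : e' = e
  · subst h; simp [diagonal_apply_eq, Function.comp]
  · simp [diagonal_apply_ne _ h, h]
end

section
/- The matrix [c_{e',e}] defined by Π E_{e'}† E_e Π = c_{e',e} Π (for a nonzero projection Π) is positive semidefinite. -/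
open Matrix
open scoped ComplexOrder

lemma trace_conj_mul_self {m : Type*} [Fintype m] (A : Matrix m m ℂ) :
    (Aᴴ * A).trace = ((∑ j, ∑ i, Complex.normSq (A i j) : ℝ) : ℂ) := by
  simp only [Matrix.trace, Matrix.diag, Matrix.mul_apply, Matrix.conjTranspose_apply]
  push_cast
  refine Finset.sum_congr rfl fun j _ => Finset.sum_congr rfl fun i _ => ?_
  rw [Complex.normSq_eq_conj_mul_self]; rfl

/-- The Knill–Laflamme matrix `[c_{e',e}]` defined by `Π E_{e'}† E_e Π = c_{e',e} Π`
is positive semidefinite. -/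
theorem KL_matrix_posSemidef
    {n ι : Type*} [Fintype n] [DecidableEq n] [Fintype ι] [DecidableEq ι]
    (P : Matrix n n ℂ) (hP : P.IsHermitian) (hP2 : P * P = P) (hPne : P ≠ 0)
    (E : ι → Matrix n n ℂ) (c : ι → ι → ℂ)
    (hc : ∀ e' e, P * (E e')ᴴ * (E e) * P = c e' e • P) :
    (Matrix.of fun e' e => c e' e).PosSemidef := by
  have hsmul : ∀ a b : ℂ, a • P = b • P → a = b := by
    intro a b h
    exact smul_left_injective ℂ hPne h
  -- trace of P is a positive real
  set r : ℝ := ∑ j, ∑ i, Complex.normSq (P i j) with hr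
  have htr : P.trace = (r : ℂ) := by
    have h := trace_conj_mul_self P
    rw [hP.eq, hP2] at h
    exact h
  have hr0 : 0 < r := by
    rcases lt_or_eq_of_le (Finset.sum_nonneg fun j _ =>
      Finset.sum_nonneg fun i _ => Complex.normSq_nonneg _ : (0:ℝ) ≤ r) with h | h
    · exact h
    · exfalso; apply hPne
      ext i j
      have h1 : ∀ j ∈ Finset.univ, (0:ℝ) ≤ ∑ i, Complex.normSq (P i j) :=
        fun j _ => Finset.sum_nonneg fun i _ => Complex.normSq_nonneg _
      have h2 := (Finset.sum_eq_zero_iff_of_nonneg h1).mp h.symm j (Finset.mem_univ j)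
      have h3 := (Finset.sum_eq_zero_iff_of_nonneg
        (fun i _ => Complex.normSq_nonneg (P i j))).mp h2 i (Finset.mem_univ i)
      simpa [Complex.normSq_eq_zero] using h3
  rw [Matrix.posSemidef_iff_dotProduct_mulVec]
  constructor
  · -- Hermitian
    ext e' e
    simp only [Matrix.conjTranspose_apply, Matrix.of_apply]
    apply hsmul
    have h1 := hc e e'
    have h2 : (P * (E e)ᴴ * (E e') * P)ᴴ = P * (E e')ᴴ * (E e) * P := by
      simp [Matrix.conjTranspose_mul, hP.eq, Matrix.mul_assoc]
    rw [h1, Matrix.conjTranspose_smul, hP.eq] at h2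
    rw [h2, hc]
  · intro x
    set s : ℂ := star x ⬝ᵥ (Matrix.of fun e' e => c e' e) *ᵥ x with hs
    set F : Matrix n n ℂ := ∑ e, x e • (E e * P) with hF
    have hFF : Fᴴ * F = s • P := by
      have expand : Fᴴ * F = ∑ e', ∑ e, (star (x e') * x e) • (P * (E e')ᴴ * (E e) * P) := by
        rw [hF, Matrix.conjTranspose_sum, Finset.sum_mul]
        refine Finset.sum_congr rfl fun e' _ => ?_
        rw [Finset.mul_sum]
        refine Finset.sum_congr rfl fun e _ => ?_
        simp only [Matrix.conjTranspose_smul, Matrix.conjTranspose_mul, hP.eq]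
        rw [Matrix.smul_mul, Matrix.mul_smul, smul_smul]
        congr 1
        simp only [Matrix.mul_assoc]
      rw [expand]
      have h2 : ∀ e' e : ι, (star (x e') * x e) • (P * (E e')ᴴ * (E e) * P)
          = (star (x e') * (c e' e * x e)) • P := by
        intro e' e
        rw [hc e' e, smul_smul]
        congr 1; ring
      have h3 : s = ∑ e', ∑ e, star (x e') * (c e' e * x e) := by
        simp [hs, dotProduct, Matrix.mulVec, Finset.mul_sum]
      calc ∑ e', ∑ e, (star (x e') * x e) • (P * (E e')ᴴ * (E e) * P)
          = ∑ e', ∑ e, (star (x e') * (c e' e * x e)) • P := by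
            exact Finset.sum_congr rfl fun e' _ => Finset.sum_congr rfl fun e _ => h2 e' e
        _ = s • P := by
            rw [h3, Finset.sum_smul]
            exact Finset.sum_congr rfl fun e' _ => (Finset.sum_smul).symm
    set z : ℝ := ∑ j, ∑ i, Complex.normSq (F i j) with hz
    have htrF : (z : ℂ) = s * (r : ℂ) := by
      rw [← trace_conj_mul_self F, hFF, Matrix.trace_smul, htr, smul_eq_mul]
    have hrne : (r : ℂ) ≠ 0 := by exact_mod_cast hr0.ne'
    have hzF : (0:ℝ) ≤ z :=
      Finset.sum_nonneg fun j _ => Finset.sum_nonneg fun i _ => Complex.normSq_nonneg _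
    have hseq : s = (z : ℂ) / (r : ℂ) := (eq_div_iff hrne).mpr htrF.symm
    rw [hseq, ← Complex.ofReal_div]
    exact_mod_cast div_nonneg hzF hr0.le
end
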